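/- Let F be a field, α ∈ F, and N ≥ 1 an integer. Let P, V, U, G, H ∈ F[X,Y] satisfy: the Y-degrees of P and V are each at least 1; the univariate polynomial H(α,Y) ∈ F[Y] has degree at least 1; (X−α)^N divides P − G·H; (X−α)^N divides V − U·H; and N > deg_Y(V)·deg_X(P) + deg_Y(P)·deg_X(V). Then P and V have a common divisor in F[X,Y] of Y-degree at least one. -/

import Mathlib

/-!
STATEMENT 17: Let F be a field, α ∈ F, and N ≥ 1 an integer. Let P, V, U, G, H ∈ F[X,Y]
satisfy: the Y-degrees of P and V are each at least 1; the univariate polynomial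
H(α,Y) ∈ F[Y] has degree at least 1; (X−α)^N divides P − G·H; (X−α)^N divides V − U·H; and
N > deg_Y(V)·deg_X(P) + deg_Y(P)·deg_X(V). Then P and V have a common divisor in F[X,Y] of
Y-degree at least one.

Bivariate polynomials in F[X,Y] are represented as `Polynomial (Polynomial F)` with outer
variable Y and inner variable X; the Y-degree is `Polynomial.natDegree` (of the outer
polynomial), and the X-degree is the maximum of the degrees of the coefficients (defined
below).  H(α,Y) is `H.map (Polynomial.evalRingHom α)`, and (X−α) as an element of F[X,Y] is
`Polynomial.C (Polynomial.X - Polynomial.C α)`.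
-/

/-- The X-degree of a bivariate polynomial in `F[X,Y]` (represented with Y as the outer
variable): the maximum over the monomials Y^j of the degree (in X) of their coefficients. -/
noncomputable def degX {F : Type*} [CommRing F] (Q : Polynomial (Polynomial F)) : ℕ :=
  Q.support.sup fun j => (Q.coeff j).natDegree

open Polynomial

section Aux

variable {F : Type*} [Field F]

lemma natDegree_coeff_le_degX (Q : Polynomial (Polynomial F)) (j : ℕ) :
    (Q.coeff j).natDegree ≤ degX Q := by
  by_cases h : j ∈ Q.support
  · exact Finset.le_sup (f := fun j => (Q.coeff j).natDegree) h
  · rw [Polynomial.notMem_support_iff.mp h]; simp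

lemma mem_degreeLT_succ {p : Polynomial F} {D : ℕ} (h : p.natDegree ≤ D) :
    p ∈ Polynomial.degreeLT F (D + 1) := by
  rw [Polynomial.mem_degreeLT]
  calc p.degree ≤ (p.natDegree : WithBot ℕ) := Polynomial.degree_le_natDegree
    _ < ((D + 1 : ℕ) : WithBot ℕ) := by exact_mod_cast Nat.lt_succ_of_le h

lemma natDegree_le_of_mem_degreeLT {p : Polynomial F} {D : ℕ}
    (h : p ∈ Polynomial.degreeLT F (D + 1)) : p.natDegree ≤ D := by
  rw [Polynomial.mem_degreeLT] at h
  rcases eq_or_ne p 0 with rfl | h0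
  · simp
  · rw [Polynomial.degree_eq_natDegree h0] at h
    exact_mod_cast Nat.lt_succ_iff.mp (by exact_mod_cast h)

/-- The linear map sending a tuple of coefficients (of bounded X-degree) to the
corresponding bivariate polynomial of Y-degree < n. -/
noncomputable def toBivL (F : Type*) [Field F] (n A : ℕ) :
    (Fin n → Polynomial.degreeLT F A) →ₗ[F] Polynomial (Polynomial F) where
  toFun v := ∑ i : Fin n, Polynomial.monomial i.1 (v i : Polynomial F)
  map_add' v w := by
    rw [← Finset.sum_add_distrib]
    exact Finset.sum_congr rfl fun i _ => by simp
  map_smul' c v := by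
    show (∑ i : Fin n, Polynomial.monomial i.1 (((c • v) i : Polynomial F)))
      = (RingHom.id F) c • ∑ i : Fin n, Polynomial.monomial i.1 (v i : Polynomial F)
    rw [RingHom.id_apply, Finset.smul_sum]
    refine Finset.sum_congr rfl fun i _ => ?_
    have h : ((c • v) i : Polynomial F) = c • (v i : Polynomial F) := rfl
    rw [h, Polynomial.smul_monomial]

lemma toBivL_apply (n A : ℕ) (v : Fin n → Polynomial.degreeLT F A) :
    toBivL F n A v = ∑ i : Fin n, Polynomial.monomial i.1 (v i : Polynomial F) := rfl

lemma toBivL_coeff (n A : ℕ) (v : Fin n → Polynomial.degreeLT F A) (j : ℕ) :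
    (toBivL F n A v).coeff j = if h : j < n then (v ⟨j, h⟩ : Polynomial F) else 0 := by
  rw [toBivL_apply, Polynomial.finset_sum_coeff]
  simp only [Polynomial.coeff_monomial]
  split_ifs with h
  · rw [Finset.sum_eq_single (⟨j, h⟩ : Fin n)]
    · simp
    · intro i _ hij
      exact if_neg fun hc => hij (Fin.ext hc)
    · intro hmem; exact absurd (Finset.mem_univ _) hmem
  · exact Finset.sum_eq_zero fun i _ => if_neg fun hc => h (by rw [← hc]; exact i.2)

lemma toBivL_degree (n A : ℕ) (v : Fin n → Polynomial.degreeLT F A) :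
    (toBivL F n A v).degree < (n : WithBot ℕ) := by
  rw [toBivL_apply]
  refine lt_of_le_of_lt (Polynomial.degree_sum_le _ _) ?_
  rw [Finset.sup_lt_iff (by exact_mod_cast WithBot.bot_lt_coe n)]
  intro i _
  exact lt_of_le_of_lt (Polynomial.degree_monomial_le _ _) (by exact_mod_cast i.2)

lemma toBivL_natDegree (n A : ℕ) (hn : 0 < n) (v : Fin n → Polynomial.degreeLT F A) :
    (toBivL F n A v).natDegree < n := by
  rcases eq_or_ne (toBivL F n A v) 0 with h | h
  · rw [h]; simpa using hn
  · have hd := toBivL_degree n A v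
    rw [Polynomial.degree_eq_natDegree h] at hd
    exact_mod_cast hd

lemma toBivL_coeff_natDegree (n A : ℕ) (v : Fin n → Polynomial.degreeLT F (A + 1)) (j : ℕ) :
    ((toBivL F n (A + 1) v).coeff j).natDegree ≤ A := by
  rw [toBivL_coeff]
  split_ifs with h
  · exact natDegree_le_of_mem_degreeLT (v ⟨j, h⟩).2
  · simp

lemma toBivL_eq_zero_iff (n A : ℕ) (v : Fin n → Polynomial.degreeLT F A)
    (h : toBivL F n A v = 0) : v = 0 := by
  funext i
  have := toBivL_coeff n A v i.1
  rw [h, Polynomial.coeff_zero] at this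
  rw [dif_pos i.2] at this
  exact Subtype.ext (by simpa [Fin.eta] using this.symm)

lemma natDegree_coeff_mul_le {a Q : Polynomial (Polynomial F)} {A d : ℕ}
    (ha : ∀ i, (a.coeff i).natDegree ≤ A) (hQ : ∀ i, (Q.coeff i).natDegree ≤ d) (k : ℕ) :
    (((a * Q).coeff k)).natDegree ≤ A + d := by
  rw [Polynomial.coeff_mul]
  refine Polynomial.natDegree_sum_le_of_forall_le _ _ fun i _ => ?_
  exact le_trans (Polynomial.natDegree_mul_le) (add_le_add (ha _) (hQ _))

/-- The key local (valuation at X = α) lemma: if `C r = Co * H + (X-α)^N * K` with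
`H(α,Y)` of positive degree, then `(X-α)^N ∣ r`. -/
lemma key_dvd (α : F) (N : ℕ) (H Co K : Polynomial (Polynomial F))
    (hH : 1 ≤ (H.map (Polynomial.evalRingHom α)).natDegree)
    (r : Polynomial F)
    (hr : Polynomial.C r = Co * H + (Polynomial.C (Polynomial.X - Polynomial.C α)) ^ N * K) :
    (Polynomial.X - Polynomial.C α) ^ N ∣ r := by
  set t : Polynomial F := Polynomial.X - Polynomial.C α with ht
  have ht0 : t ≠ 0 := Polynomial.X_sub_C_ne_zero α
  have hHm0 : H.map (Polynomial.evalRingHom α) ≠ 0 := by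
    intro h; rw [h] at hH; simp at hH
  have main : ∀ k, k ≤ N → (Polynomial.C t) ^ k ∣ Co := by
    intro k
    induction k with
    | zero => exact fun _ => one_dvd _
    | succ k ih =>
      intro hk1
      obtain ⟨C₁, hC₁⟩ := ih (Nat.le_of_succ_le hk1)
      have hkN : k ≤ N := Nat.le_of_succ_le hk1
      have hpow : (Polynomial.C t) ^ k * (Polynomial.C t) ^ (N - k) = (Polynomial.C t) ^ N := by
        rw [← pow_add, Nat.add_sub_cancel' hkN]
      have hCE : Polynomial.C (t ^ k) * (C₁ * H + (Polynomial.C t) ^ (N - k) * K)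
          = Polynomial.C r := by
        calc Polynomial.C (t ^ k) * (C₁ * H + (Polynomial.C t) ^ (N - k) * K)
            = ((Polynomial.C t) ^ k * C₁) * H
              + ((Polynomial.C t) ^ k * (Polynomial.C t) ^ (N - k)) * K := by
              rw [map_pow]; ring
          _ = Co * H + (Polynomial.C t) ^ N * K := by rw [hpow, ← hC₁]
          _ = Polynomial.C r := hr.symm
      have hEc : ∀ j, 0 < j → (C₁ * H + (Polynomial.C t) ^ (N - k) * K).coeff j = 0 := by
        intro j hj
        have h1 := congrArg (fun p => Polynomial.coeff p j) hCE
        simp only [Polynomial.coeff_C_mul, Polynomial.coeff_C] at h1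
        rw [if_neg (by omega)] at h1
        exact (mul_eq_zero.mp h1).resolve_left (pow_ne_zero _ ht0)
      have hENat : (C₁ * H + (Polynomial.C t) ^ (N - k) * K).natDegree ≤ 0 :=
        Polynomial.natDegree_le_iff_coeff_eq_zero.mpr fun j hj => hEc j hj
      have hEeq := Polynomial.eq_C_of_natDegree_le_zero hENat
      have hmap := congrArg (Polynomial.map (Polynomial.evalRingHom α)) hEeq
      rw [Polynomial.map_add, Polynomial.map_mul, Polynomial.map_mul, Polynomial.map_pow,
        Polynomial.map_C, Polynomial.map_C] at hmap
      have hα : (Polynomial.evalRingHom α) t = 0 := by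
        rw [ht]; simp
      rw [hα, Polynomial.C_0, zero_pow (by omega : N - k ≠ 0), zero_mul, add_zero] at hmap
      have hC₁0 : C₁.map (Polynomial.evalRingHom α) = 0 := by
        by_contra h0
        have hnd := Polynomial.natDegree_mul h0 hHm0
        rw [hmap, Polynomial.natDegree_C] at hnd
        omega
      have hdvd : Polynomial.C t ∣ C₁ := by
        rw [Polynomial.C_dvd_iff_dvd_coeff]
        intro i
        rw [ht, Polynomial.dvd_iff_isRoot]
        have h2 := congrArg (fun p => Polynomial.coeff p i) hC₁0
        simpa [Polynomial.coeff_map, Polynomial.IsRoot, Polynomial.coe_evalRingHom] using h2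
      obtain ⟨C₂, hC₂⟩ := hdvd
      exact ⟨C₂, by rw [hC₁, hC₂, pow_succ]; ring⟩
  obtain ⟨C₂, hC₂⟩ := main N le_rfl
  have heq : Polynomial.C r = Polynomial.C (t ^ N) * (C₂ * H + K) := by
    rw [hr, hC₂, map_pow]; ring
  refine ⟨(C₂ * H + K).coeff 0, ?_⟩
  have h3 := congrArg (fun p => Polynomial.coeff p 0) heq
  simp only [Polynomial.coeff_C_mul, Polynomial.coeff_C_zero] at h3
  exact h3

/-- From a nontrivial relation `a * P + b * V = 0` with `deg_Y b < deg_Y P`, extract a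
common divisor of `P` and `V` of positive Y-degree (Gauss's lemma). -/
lemma common_factor {P V a b : Polynomial (Polynomial F)}
    (hP : 1 ≤ P.natDegree) (ha : a ≠ 0) (hb : b ≠ 0) (hdegb : b.natDegree < P.natDegree)
    (hrel : a * P + b * V = 0) :
    ∃ W : Polynomial (Polynomial F), 1 ≤ W.natDegree ∧ W ∣ P ∧ W ∣ V := by
  classical
  set R := Polynomial F
  set K := FractionRing R
  have hinj : Function.Injective (algebraMap R K) := IsFractionRing.injective R K
  have hminj : Function.Injective fun q : Polynomial R => q.map (algebraMap R K) :=
    fun x y hxy => Polynomial.map_injective _ hinj hxy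
  have hP0 : P ≠ 0 := fun h => by rw [h] at hP; simp at hP
  set P' := P.map (algebraMap R K) with hP'def
  set V' := V.map (algebraMap R K) with hV'def
  set a' := a.map (algebraMap R K) with ha'def
  set b' := b.map (algebraMap R K) with hb'def
  have hmap0 : ∀ q : Polynomial R, q.map (algebraMap R K) = 0 → q = 0 := by
    intro q hq
    exact hminj (a₁ := q) (a₂ := 0) (by simpa using hq)
  have hP'0 : P' ≠ 0 := fun h => hP0 (hmap0 _ h)
  have hb'0 : b' ≠ 0 := fun h => hb (hmap0 _ h)
  have hdeg : ∀ q : Polynomial (Polynomial F),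
      (q.map (algebraMap R K)).natDegree = q.natDegree :=
    fun q => Polynomial.natDegree_map_eq_of_injective hinj q
  have hrel' : a' * P' + b' * V' = 0 := by
    rw [ha'def, hb'def, hP'def, hV'def, ← Polynomial.map_mul, ← Polynomial.map_mul,
      ← Polynomial.map_add, hrel, Polynomial.map_zero]
  have hncop : ¬ IsCoprime P' V' := by
    intro hc
    have hdvd : P' ∣ b' * V' := ⟨-a', by linear_combination hrel'⟩
    have hPb : P' ∣ b' := hc.dvd_of_dvd_mul_right hdvd
    have h4 := Polynomial.natDegree_le_of_dvd hPb hb'0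
    rw [hdeg, hdeg] at h4
    omega
  set g := EuclideanDomain.gcd P' V' with hg
  have hg0 : g ≠ 0 := fun h => hP'0 ((EuclideanDomain.gcd_eq_zero_iff.mp h).1)
  have hgP : g ∣ P' := EuclideanDomain.gcd_dvd_left _ _
  have hgV : g ∣ V' := EuclideanDomain.gcd_dvd_right _ _
  have hgu : ¬ IsUnit g := fun h => hncop (EuclideanDomain.gcd_isUnit_iff.mp h)
  have hgdeg : 1 ≤ g.natDegree := by
    by_contra hlt
    push_neg at hlt
    apply hgu
    rw [Polynomial.isUnit_iff_degree_eq_zero, Polynomial.degree_eq_natDegree hg0]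
    norm_cast
    omega
  obtain ⟨s, hs⟩ := IsLocalization.integerNormalization_map_to_map (nonZeroDivisors R) g
  set W₀ := IsLocalization.integerNormalization (nonZeroDivisors R) g with hW₀def
  have hs0 : ((s : R)) ≠ 0 := nonZeroDivisors.coe_ne_zero s
  have hs' : (algebraMap R K) (s : R) ≠ 0 := fun h => hs0 (hinj (by rw [h, map_zero]))
  have hsu : IsUnit (Polynomial.C ((algebraMap R K) (s : R))) :=
    Polynomial.isUnit_C.mpr (isUnit_iff_ne_zero.mpr hs')
  have hW₀g : W₀.map (algebraMap R K) = Polynomial.C ((algebraMap R K) (s : R)) * g := by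
    rw [hs]
    ext i
    simp [Polynomial.coeff_smul, Polynomial.coeff_C_mul, Algebra.smul_def]
  have hW₀0 : W₀ ≠ 0 := by
    intro h
    rw [h, Polynomial.map_zero] at hW₀g
    exact (mul_ne_zero hsu.ne_zero hg0) hW₀g.symm
  set W := W₀.primPart with hWdef
  have hWprim : W.IsPrimitive := Polynomial.isPrimitive_primPart W₀
  have hWdeg : 1 ≤ W.natDegree := by
    have h1 : W.natDegree = W₀.natDegree := Polynomial.natDegree_primPart W₀
    have h2 : W₀.natDegree = (W₀.map (algebraMap R K)).natDegree := (hdeg W₀).symm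
    rw [h1, h2, hW₀g, Polynomial.natDegree_mul hsu.ne_zero hg0, Polynomial.natDegree_C]
    omega
  have hWmap_dvd_g : W.map (algebraMap R K) ∣ g := by
    have h1 : W ∣ W₀ := W₀.primPart_dvd
    have h2 : W.map (algebraMap R K) ∣ W₀.map (algebraMap R K) := Polynomial.map_dvd _ h1
    rw [hW₀g] at h2
    exact (hsu.dvd_mul_left).mp h2
  have hcontent : ∀ Q : Polynomial (Polynomial F), Q ≠ 0 →
      W.map (algebraMap R K) ∣ Q.map (algebraMap R K) → W ∣ Q := by
    intro Q hQ0 hdvdQ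
    have hcQ : IsUnit (Polynomial.C ((algebraMap R K) Q.content)) :=
      Polynomial.isUnit_C.mpr (isUnit_iff_ne_zero.mpr
        (fun h => (Polynomial.content_eq_zero_iff.not.mpr hQ0)
          (hinj (by rw [h, map_zero]))))
    have hQsplit : Q.map (algebraMap R K)
        = Polynomial.C ((algebraMap R K) Q.content) * Q.primPart.map (algebraMap R K) := by
      conv_lhs => rw [Q.eq_C_content_mul_primPart]
      rw [Polynomial.map_mul, Polynomial.map_C]
    rw [hQsplit] at hdvdQ
    have h5 : W.map (algebraMap R K) ∣ Q.primPart.map (algebraMap R K) :=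
      (hcQ.dvd_mul_left).mp hdvdQ
    have h6 : W ∣ Q.primPart :=
      hWprim.dvd_of_fraction_map_dvd_fraction_map h5
    exact h6.trans Q.primPart_dvd
  have hV0 : V ≠ 0 := by
    intro h
    rw [h, mul_zero, add_zero, mul_eq_zero] at hrel
    exact hP0 (hrel.resolve_left ha)
  exact ⟨W, hWdeg, hcontent P hP0 (hWmap_dvd_g.trans hgP),
    hcontent V hV0 (hWmap_dvd_g.trans hgV)⟩

end Aux

theorem statement17 (F : Type*) [Field F] (α : F) (N : ℕ) (hN : 1 ≤ N)
    (P V U G H : Polynomial (Polynomial F))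
    (hP : 1 ≤ P.natDegree) (hV : 1 ≤ V.natDegree)
    (hH : 1 ≤ (H.map (Polynomial.evalRingHom α)).natDegree)
    (hPGH : (Polynomial.C (Polynomial.X - Polynomial.C α)) ^ N ∣ (P - G * H))
    (hVUH : (Polynomial.C (Polynomial.X - Polynomial.C α)) ^ N ∣ (V - U * H))
    (hNlarge : V.natDegree * degX P + P.natDegree * degX V < N) :
    ∃ W : Polynomial (Polynomial F), 1 ≤ W.natDegree ∧ W ∣ P ∧ W ∣ V := by
  classical
  set m := P.natDegree with hm
  set n := V.natDegree with hn
  set dP := degX P with hdP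
  set dV := degX V with hdV
  set D := n * dP + m * dV with hD
  have hdPD : dP ≤ D := le_trans (by nlinarith) (Nat.le_add_right _ _)
  have hdVD : dV ≤ D := le_trans (by nlinarith) (Nat.le_add_left _ _)
  obtain ⟨A, hA⟩ : ∃ A, D = A + dP := ⟨D - dP, (Nat.sub_add_cancel hdPD).symm⟩
  obtain ⟨B, hB⟩ : ∃ B, D = B + dV := ⟨D - dV, (Nat.sub_add_cancel hdVD).symm⟩
  -- the domain and codomain of the linear map
  set M := (Fin n → Polynomial.degreeLT F (A + 1)) × (Fin m → Polynomial.degreeLT F (B + 1))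
    with hM
  haveI : ∀ k : ℕ, Module.Finite F (Polynomial.degreeLT F k) :=
    fun k => Module.Finite.equiv (Polynomial.degreeLTEquiv F k).symm
  have hrkLT : ∀ k : ℕ, Module.finrank F (Polynomial.degreeLT F k) = k := by
    intro k
    rw [(Polynomial.degreeLTEquiv F k).finrank_eq, Module.finrank_fin_fun]
  -- the bilinear combination
  set comb : M → Polynomial (Polynomial F) := fun x =>
    toBivL F n (A + 1) x.1 * P + toBivL F m (B + 1) x.2 * V with hcomb
  have hcomb_coeff : ∀ x : M, ∀ k : ℕ, ((comb x).coeff k).natDegree ≤ D := by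
    intro x k
    rw [hcomb]
    simp only [Polynomial.coeff_add]
    refine le_trans (Polynomial.natDegree_add_le _ _) (max_le ?_ ?_)
    · rw [hA]
      exact natDegree_coeff_mul_le (toBivL_coeff_natDegree n A x.1)
        (natDegree_coeff_le_degX P) k
    · rw [hB]
      exact natDegree_coeff_mul_le (toBivL_coeff_natDegree m B x.2)
        (natDegree_coeff_le_degX V) k
  -- the linear map
  set combL : M →ₗ[F] Polynomial (Polynomial F) :=
    ((LinearMap.mulRight F P).restrictScalars F ∘ₗ
      (toBivL F n (A + 1)) ∘ₗ (LinearMap.fst F _ _)) +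
    ((LinearMap.mulRight F V).restrictScalars F ∘ₗ
      (toBivL F m (B + 1)) ∘ₗ (LinearMap.snd F _ _)) with hcombL
  have hcombL_apply : ∀ x : M, combL x = comb x := fun x => rfl
  set Φ : M →ₗ[F] (Fin (m + n - 1) → Polynomial.degreeLT F (D + 1)) :=
    LinearMap.pi (fun j =>
      LinearMap.codRestrict (Polynomial.degreeLT F (D + 1))
        ((Polynomial.lcoeff (Polynomial F) (j.1 + 1)).restrictScalars F ∘ₗ combL)
        (fun x => mem_degreeLT_succ (by
          simpa [hcombL_apply] using hcomb_coeff x (j.1 + 1)))) with hΦ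
  have hΦ_apply : ∀ x : M, ∀ j : Fin (m + n - 1),
      ((Φ x j : Polynomial F)) = (comb x).coeff (j.1 + 1) := fun x j => rfl
  -- dimension count
  obtain ⟨m', hm'⟩ : ∃ m', m = m' + 1 := ⟨m - 1, by omega⟩
  obtain ⟨n', hn'⟩ : ∃ n', n = n' + 1 := ⟨n - 1, by omega⟩
  have hdim : Module.finrank F (Fin (m + n - 1) → Polynomial.degreeLT F (D + 1))
      < Module.finrank F M := by
    have h1 : Module.finrank F (Fin (m + n - 1) → Polynomial.degreeLT F (D + 1))
        = (m + n - 1) * (D + 1) := by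
      rw [Module.finrank_pi_fintype, Finset.sum_const, Finset.card_univ, Fintype.card_fin,
        smul_eq_mul, hrkLT]
    have h2 : Module.finrank F M = n * (A + 1) + m * (B + 1) := by
      show Module.finrank F ((Fin n → Polynomial.degreeLT F (A + 1)) ×
        (Fin m → Polynomial.degreeLT F (B + 1))) = _
      rw [Module.finrank_prod, Module.finrank_pi_fintype, Module.finrank_pi_fintype]
      simp [Finset.sum_const, Finset.card_univ, hrkLT, mul_comm]
    rw [h1, h2]
    have key : n * (A + 1) + m * (B + 1) = (m + n - 1) * (D + 1) + 1 := by
      have h3 : m + n - 1 = m' + n' + 1 := by omega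
      rw [h3, hm', hn']
      have hDint : (D : ℤ) = (n' + 1) * dP + (m' + 1) * dV := by
        rw [hm', hn'] at hD; exact_mod_cast hD
      have hAint : (D : ℤ) = A + dP := by exact_mod_cast hA
      have hBint : (D : ℤ) = B + dV := by exact_mod_cast hB
      have : ((n' : ℤ) + 1) * (A + 1) + ((m' : ℤ) + 1) * (B + 1)
          = ((m' : ℤ) + n' + 1) * (D + 1) + 1 := by
        linear_combination hDint - ((n' : ℤ) + 1) * hAint - ((m' : ℤ) + 1) * hBint
      exact_mod_cast this
    omega
  -- a nonzero kernel element
  have hker : ∃ x : M, x ≠ 0 ∧ Φ x = 0 := by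
    by_contra hcon
    push_neg at hcon
    have hinj : Function.Injective Φ := by
      rw [← LinearMap.ker_eq_bot, Submodule.eq_bot_iff]
      intro x hx
      by_contra hx0
      exact (hcon x hx0) hx
    exact absurd (LinearMap.finrank_le_finrank_of_injective hinj) (by omega)
  obtain ⟨x, hx0, hxker⟩ := hker
  set a := toBivL F n (A + 1) x.1 with ha
  set b := toBivL F m (B + 1) x.2 with hb
  -- all coefficients of Y^k for k ≥ 1 vanish
  have hcoeff0 : ∀ k : ℕ, 1 ≤ k → (a * P + b * V).coeff k = 0 := by
    intro k hk
    rcases lt_or_ge k (m + n) with hlt | hge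
    · have hj : k - 1 < m + n - 1 := by omega
      have h9 : ((Φ x ⟨k - 1, hj⟩ : Polynomial.degreeLT F (D + 1)) : Polynomial F) = 0 := by
        rw [hxker]; rfl
      have h8 : (a * P + b * V).coeff (k - 1 + 1) = 0 := h9
      rw [show k - 1 + 1 = k by omega] at h8
      exact h8
    · apply Polynomial.coeff_eq_zero_of_natDegree_lt
      refine lt_of_le_of_lt (Polynomial.natDegree_add_le _ _) (max_lt ?_ ?_)
      · refine lt_of_le_of_lt (Polynomial.natDegree_mul_le) ?_
        have h7 : a.natDegree < n := toBivL_natDegree n (A + 1) (by omega) x.1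
        omega
      · refine lt_of_le_of_lt (Polynomial.natDegree_mul_le) ?_
        have h7 : b.natDegree < m := toBivL_natDegree m (B + 1) (by omega) x.2
        omega
  set r := (a * P + b * V).coeff 0 with hrdef
  have heqC : a * P + b * V = Polynomial.C r := by
    apply Polynomial.eq_C_of_natDegree_le_zero
    exact Polynomial.natDegree_le_iff_coeff_eq_zero.mpr fun j hj => hcoeff0 j hj
  have hrD : r.natDegree ≤ D := hcomb_coeff x 0
  have hP0 : P ≠ 0 := by intro h; rw [h, Polynomial.natDegree_zero] at hm; omega
  have hV0 : V ≠ 0 := by intro h; rw [h, Polynomial.natDegree_zero] at hn; omega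
  have hab0 : a ≠ 0 ∨ b ≠ 0 := by
    by_contra hcon
    push_neg at hcon
    apply hx0
    have h1 : x.1 = 0 := toBivL_eq_zero_iff _ _ _ hcon.1
    have h2 : x.2 = 0 := toBivL_eq_zero_iff _ _ _ hcon.2
    exact Prod.ext h1 h2
  by_cases hr : r = 0
  · -- nontrivial relation, get common factor via Gauss
    rw [hr, Polynomial.C_0] at heqC
    have hbne : b ≠ 0 := by
      intro hb0
      rw [hb0, zero_mul, add_zero, mul_eq_zero] at heqC
      have ha0 : a = 0 := heqC.resolve_right hP0
      exact (hab0.resolve_left (fun h => h ha0)) hb0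
    have hane : a ≠ 0 := by
      intro ha0
      rw [ha0, zero_mul, zero_add, mul_eq_zero] at heqC
      exact hbne (heqC.resolve_right hV0)
    have hdegb : b.natDegree < P.natDegree :=
      lt_of_lt_of_le (toBivL_natDegree m (B + 1) (by omega) x.2) (le_of_eq hm)
    exact common_factor hP hane hbne hdegb heqC
  · -- r ≠ 0 : contradiction with the degree bound
    exfalso
    obtain ⟨P₂, hP₂⟩ := hPGH
    obtain ⟨V₂, hV₂⟩ := hVUH
    have hrel : Polynomial.C r = (a * G + b * U) * H
        + (Polynomial.C (Polynomial.X - Polynomial.C α)) ^ N * (a * P₂ + b * V₂) := by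
      have hPe : P = G * H + (Polynomial.C (Polynomial.X - Polynomial.C α)) ^ N * P₂ := by
        linear_combination hP₂
      have hVe : V = U * H + (Polynomial.C (Polynomial.X - Polynomial.C α)) ^ N * V₂ := by
        linear_combination hV₂
      rw [← heqC, hPe, hVe]
      ring
    have hdvd := key_dvd α N H (a * G + b * U) (a * P₂ + b * V₂) hH r hrel
    have hnd := Polynomial.natDegree_le_of_dvd hdvd hr
    rw [Polynomial.natDegree_pow, Polynomial.natDegree_X_sub_C, mul_one] at hnd
    omega
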